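/- Let d ≥ 2, let H = (V, E) be a d-sparse finite graph with d-critical cover 𝒳 satisfying |𝒳| ≥ 2, and suppose every d-critical component of H has at least d + 2 vertices. Put a_j = Σ_{U ∈ Θ_j(𝒳)} (d_𝒳(U) − 1) for 0 ≤ j ≤ d. Then for every 0 ≤ k ≤ d − 2 we have d(d − k) a_{k+1} < (k + 2)(d − k − 1) binom(d+1, k+2) · (|𝒳| − 1). -/

import Mathlib

open Finset
open scoped Classical

variable {α : Type*} [DecidableEq α]

/-- The set of edges of `E` with both endpoints in `X`. -/
noncomputable def inducedEdges (E : Finset (Sym2 α)) (X : Finset α) : Finset (Sym2 α) :=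
  E.filter fun e => ∀ v ∈ e, v ∈ X

/-- `i_G(X)`: the number of edges of `E` with both endpoints in `X`. -/
noncomputable def iG (E : Finset (Sym2 α)) (X : Finset α) : ℕ :=
  (inducedEdges E X).card

/-- `E` is a valid edge set on the vertex set `V`: edges are loopless and join vertices of `V`. -/
def ValidOn (V : Finset α) (E : Finset (Sym2 α)) : Prop :=
  ∀ e ∈ E, ¬ e.IsDiag ∧ ∀ v ∈ e, v ∈ V

/-- The graph `(V, E)` is `d`-sparse: every `X ⊆ V` with `|X| ≥ d` satisfies
`i(X) ≤ d|X| - (d+1 choose 2)`. -/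
noncomputable def Sparse (d : ℕ) (V : Finset α) (E : Finset (Sym2 α)) : Prop :=
  ∀ X ⊆ V, d ≤ X.card → iG E X + Nat.choose (d + 1) 2 ≤ d * X.card

/-- `(U, F)` is a subgraph of `(V, E)`. -/
def IsSubgraph (V : Finset α) (E : Finset (Sym2 α)) (U : Finset α) (F : Finset (Sym2 α)) :
    Prop :=
  U ⊆ V ∧ F ⊆ E ∧ ∀ e ∈ F, ∀ v ∈ e, v ∈ U

/-- The graph `(U, F)` is `d`-critical: either `|U| = 2` and `|F| = 1`, or `|U| ≥ d + 2` and
`|F| = d|U| - (d+1 choose 2)`. -/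
def Critical (d : ℕ) (U : Finset α) (F : Finset (Sym2 α)) : Prop :=
  (U.card = 2 ∧ F.card = 1) ∨
  (d + 2 ≤ U.card ∧ F.card + Nat.choose (d + 1) 2 = d * U.card)

/-- `(U, F)` is a `d`-critical subgraph of `(V, E)`. -/
def CritSubgraph (d : ℕ) (V : Finset α) (E : Finset (Sym2 α)) (U : Finset α)
    (F : Finset (Sym2 α)) : Prop :=
  IsSubgraph V E U F ∧ Critical d U F

/-- `(U, F)` is a `d`-critical component of `(V, E)`: a `d`-critical subgraph not properly
contained in any other `d`-critical subgraph. -/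
def CritComponent (d : ℕ) (V : Finset α) (E : Finset (Sym2 α)) (U : Finset α)
    (F : Finset (Sym2 α)) : Prop :=
  CritSubgraph d V E U F ∧
  ∀ U' F', CritSubgraph d V E U' F' → U ⊆ U' → F ⊆ F' → U = U' ∧ F = F'

/-- The `d`-critical cover of `(V, E)`: the family of vertex sets of its `d`-critical
components. -/
noncomputable def critCover (d : ℕ) (V : Finset α) (E : Finset (Sym2 α)) :
    Finset (Finset α) :=
  V.powerset.filter fun U => ∃ F, CritComponent d V E U F

/-- `d_𝒳(W)`: the number of members of the family `𝒳` containing `W`. -/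
def degX (𝒳 : Finset (Finset α)) (W : Finset α) : ℕ :=
  (𝒳.filter fun X => W ⊆ X).card

/-- `Θ_k(𝒳)`: the set of `k`-hinges of `𝒳`, i.e. `k`-element subsets of `V` lying in at least
two members of `𝒳`.  (For `k = 0` this is `{∅}` exactly when `|𝒳| ≥ 2`.) -/
noncomputable def theta (V : Finset α) (𝒳 : Finset (Finset α)) (k : ℕ) :
    Finset (Finset α) :=
  V.powerset.filter fun W => W.card = k ∧ 2 ≤ degX 𝒳 W

/-- `𝒳` is a cover of `(V, E)`: every member has at least two vertices and every edge is
induced by some member. -/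
def IsCover (E : Finset (Sym2 α)) (𝒳 : Finset (Finset α)) : Prop :=
  (∀ X ∈ 𝒳, 2 ≤ X.card) ∧ ∀ e ∈ E, ∃ X ∈ 𝒳, ∀ v ∈ e, v ∈ X

/-- `𝒳` is `t`-thin: any two distinct members intersect in at most `t` vertices. -/
def Thin (t : ℕ) (𝒳 : Finset (Finset α)) : Prop :=
  ∀ X ∈ 𝒳, ∀ Y ∈ 𝒳, X ≠ Y → (X ∩ Y).card ≤ t

/-- `(V, F)` is a maximal `d`-sparse (spanning) subgraph of `(V, E)`. -/
noncomputable def MaxSparse (d : ℕ) (V : Finset α) (E F : Finset (Sym2 α)) : Prop :=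
  F ⊆ E ∧ Sparse d V F ∧ ∀ e ∈ E, e ∉ F → ¬ Sparse d V (insert e F)

/-- endpoints of a Sym2 element as a Finset -/
noncomputable def ends (e : Sym2 α) : Finset α :=
  Sym2.lift ⟨fun a b => ({a, b} : Finset α), fun a b => Finset.pair_comm a b⟩ e

@[simp] lemma ends_mk (a b : α) : ends (s(a, b)) = ({a, b} : Finset α) := rfl

lemma mem_ends {e : Sym2 α} {x : α} : x ∈ ends e ↔ x ∈ e := by
  induction e using Sym2.ind with
  | _ a b => simp [Sym2.mem_iff]

lemma ends_subset_iff {e : Sym2 α} {X : Finset α} : ends e ⊆ X ↔ ∀ v ∈ e, v ∈ X := by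
  constructor
  · intro h v hv; exact h (mem_ends.mpr hv)
  · intro h x hx; exact h x (mem_ends.mp hx)

lemma card_ends {e : Sym2 α} (h : ¬ e.IsDiag) : (ends e).card = 2 := by
  induction e using Sym2.ind with
  | _ a b =>
    have hab : a ≠ b := by simpa [Sym2.isDiag_iff_proj_eq] using h
    simp [Finset.card_insert_of_notMem, hab]

lemma ends_inj {e f : Sym2 α} (h : ends e = ends f) : e = f := by
  induction e using Sym2.ind with
  | _ a b =>
    induction f using Sym2.ind with
    | _ c d =>
      simp only [ends_mk] at h
      have ha : a ∈ ({c, d} : Finset α) := by rw [← h]; simp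
      have hc : c ∈ ({a, b} : Finset α) := by rw [h]; simp
      have hd : d ∈ ({a, b} : Finset α) := by rw [h]; simp
      have hb : b ∈ ({c, d} : Finset α) := by rw [← h]; simp
      simp only [Finset.mem_insert, Finset.mem_singleton] at ha hb hc hd
      rw [Sym2.eq_iff]
      rcases ha with rfl | rfl <;> rcases hb with rfl | rfl <;> tauto

/-- double counting incidences -/
lemma double_count {β γ : Type*} (s : Finset β) (t : Finset γ) (R : β → γ → Prop)
    [∀ b, DecidablePred (R b)] [∀ c, DecidablePred (fun b => R b c)] :
    ∑ b ∈ s, (t.filter fun c => R b c).card = ∑ c ∈ t, (s.filter fun b => R b c).card := by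
  simp_rw [Finset.card_filter]
  rw [Finset.sum_comm]

/-- sum comparison via an injection -/
lemma sum_le_sum_inj {β γ : Type*} {s : Finset β} {t : Finset γ}
    {f : β → ℕ} {g : γ → ℕ} (i : β → γ)
    (hinj : ∀ a ∈ s, ∀ b ∈ s, i a = i b → a = b)
    (hmem : ∀ a ∈ s, i a ∈ t)
    (hval : ∀ a ∈ s, f a = g (i a)) :
    ∑ b ∈ s, f b ≤ ∑ c ∈ t, g c := by
  calc ∑ b ∈ s, f b = ∑ b ∈ s, g (i b) := Finset.sum_congr rfl hval
  _ = ∑ c ∈ s.image i, g c := (Finset.sum_image hinj).symm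
  _ ≤ ∑ c ∈ t, g c := Finset.sum_le_sum_of_subset (Finset.image_subset_iff.mpr hmem)

/-- number of edges inside a set W is at most (|W| choose 2) -/
lemma edges_inside_le (E : Finset (Sym2 α)) (hval : ∀ e ∈ E, ¬ e.IsDiag) (W : Finset α) :
    (E.filter fun e => ends e ⊆ W).card ≤ W.card.choose 2 := by
  rw [← Finset.card_powersetCard 2 W]
  apply Finset.card_le_card_of_injOn ends
  · intro e he
    rw [Finset.mem_coe, Finset.mem_filter] at he
    rw [Finset.mem_coe, Finset.mem_powersetCard]
    exact ⟨he.2, card_ends (hval e he.1)⟩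
  · intro e he f hf h
    exact ends_inj h

/-- drop terms with value 0: sum of (h x - 1) restricted to h x ≥ 2 -/
lemma sum_sub_one_filter {β : Type*} (s : Finset β) (h : β → ℕ) :
    ∑ x ∈ s, (h x - 1) = ∑ x ∈ s.filter (fun x => 2 ≤ h x), (h x - 1) := by
  symm
  apply Finset.sum_subset (Finset.filter_subset _ _)
  intro x hx hnx
  rw [Finset.mem_filter] at hnx
  push_neg at hnx
  have := hnx hx
  omega

/-- split a sum of positive values -/
lemma sum_eq_card_add_sub {β : Type*} (s : Finset β) (h : β → ℕ) (h1 : ∀ x ∈ s, 1 ≤ h x) :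
    ∑ x ∈ s, h x = s.card + ∑ x ∈ s, (h x - 1) := by
  rw [Finset.card_eq_sum_ones, ← Finset.sum_add_distrib]
  apply Finset.sum_congr rfl
  intro x hx
  have := h1 x hx
  omega

lemma two_mul_choose_two (n : ℕ) : 2 * n.choose 2 = n * (n - 1) := by
  induction n with
  | zero => simp
  | succ m ih =>
    rw [Nat.choose_succ_succ]
    cases m with
    | zero => simp
    | succ l =>
      simp only [Nat.succ_sub_one] at *
      rw [Nat.mul_add, ih, Nat.choose_one_right]
      ring_nf

-- ============ part 2 ============
section Part2

variable {d : ℕ} {V : Finset α} {E : Finset (Sym2 α)} {𝒳 : Finset (Finset α)}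

/-- all the facts we need about members of the critical cover -/
def CoverFacts (d : ℕ) (V : Finset α) (E : Finset (Sym2 α)) (𝒳 : Finset (Finset α)) : Prop :=
  ∀ X ∈ 𝒳, X ⊆ V ∧ d + 2 ≤ X.card ∧ iG E X + Nat.choose (d+1) 2 = d * X.card ∧
    (inducedEdges E X).card + Nat.choose (d+1) 2 = d * X.card ∧
    ∀ Z, X ⊆ Z → Z ⊆ V → d + 2 ≤ Z.card → iG E Z + Nat.choose (d+1) 2 = d * Z.card → Z = X

lemma cover_facts (hd : 2 ≤ d) (hsp : Sparse d V E) (h𝒳 : 𝒳 = critCover d V E)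
    (hbig : ∀ U F, CritComponent d V E U F → d + 2 ≤ U.card) :
    CoverFacts d V E 𝒳 := by
  intro X hX
  rw [h𝒳, critCover, Finset.mem_filter, Finset.mem_powerset] at hX
  obtain ⟨hXV, F, hcomp⟩ := hX
  have hbigX : d + 2 ≤ X.card := hbig X F hcomp
  obtain ⟨⟨hsub, hcrit⟩, hmax⟩ := hcomp
  have hFcard : F.card + Nat.choose (d+1) 2 = d * X.card := by
    rcases hcrit with ⟨h2, _⟩ | ⟨_, h⟩
    · omega
    · exact h
  have hFsub : F ⊆ inducedEdges E X := by
    intro e he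
    rw [inducedEdges, Finset.mem_filter]
    exact ⟨hsub.2.1 he, hsub.2.2 e he⟩
  have hspX := hsp X hXV (by omega)
  have hcard : (inducedEdges E X).card = F.card := by
    have h1 : F.card ≤ (inducedEdges E X).card := Finset.card_le_card hFsub
    have h2 : iG E X + Nat.choose (d+1) 2 ≤ d * X.card := hspX
    rw [iG] at h2
    omega
  have hFeq : F = inducedEdges E X := Finset.eq_of_subset_of_card_le hFsub (le_of_eq hcard)
  have hiG : iG E X + Nat.choose (d+1) 2 = d * X.card := by rw [iG, hcard]; exact hFcard
  refine ⟨hXV, hbigX, hiG, by rw [hcard]; exact hFcard, ?_⟩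
  intro Z hXZ hZV hZcard hZeq
  have hcs : CritSubgraph d V E Z (inducedEdges E Z) := by
    refine ⟨⟨hZV, Finset.filter_subset _ _, ?_⟩, Or.inr ⟨hZcard, ?_⟩⟩
    · intro e he; exact (Finset.mem_filter.mp he).2
    · rw [← iG]; exact hZeq
  have hFF : F ⊆ inducedEdges E Z := by
    rw [hFeq]
    intro e he
    rw [inducedEdges, Finset.mem_filter] at he ⊢
    exact ⟨he.1, fun v hv => hXZ (he.2 v hv)⟩
  exact (hmax Z (inducedEdges E Z) hcs hXZ hFF).1.symm

lemma induced_inter (E : Finset (Sym2 α)) (X Y : Finset α) :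
    inducedEdges E X ∩ inducedEdges E Y = inducedEdges E (X ∩ Y) := by
  ext e
  simp only [inducedEdges, Finset.mem_inter, Finset.mem_filter]
  constructor
  · rintro ⟨⟨he, h1⟩, _, h2⟩
    exact ⟨he, fun v hv => ⟨h1 v hv, h2 v hv⟩⟩
  · rintro ⟨he, h⟩
    exact ⟨⟨he, fun v hv => (h v hv).1⟩, he, fun v hv => (h v hv).2⟩

lemma indMono (E : Finset (Sym2 α)) {X Y : Finset α} (h : X ⊆ Y) :
    inducedEdges E X ⊆ inducedEdges E Y := by
  intro e he
  rw [inducedEdges, Finset.mem_filter] at he ⊢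
  exact ⟨he.1, fun v hv => h (he.2 v hv)⟩

lemma induced_union_sub (E : Finset (Sym2 α)) (X Y : Finset α) :
    inducedEdges E X ∪ inducedEdges E Y ⊆ inducedEdges E (X ∪ Y) := by
  apply Finset.union_subset
  · exact indMono E (Finset.subset_union_left)
  · exact indMono E (Finset.subset_union_right)

/-- thinness: any two distinct members intersect in fewer than d vertices -/
lemma thin (hd : 2 ≤ d) (hsp : Sparse d V E) (hf : CoverFacts d V E 𝒳) :
    ∀ X ∈ 𝒳, ∀ X' ∈ 𝒳, X ≠ X' → (X ∩ X').card < d := by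
  intro X hX X' hX' hne
  by_contra hc
  push_neg at hc
  obtain ⟨hXV, hXcard, hXiG, _, hXmax⟩ := hf X hX
  obtain ⟨hX'V, hX'card, hX'iG, _, hX'max⟩ := hf X' hX'
  have hZV : X ∪ X' ⊆ V := Finset.union_subset hXV hX'V
  have hIV : X ∩ X' ⊆ V := fun v hv => hXV (Finset.mem_inter.mp hv).1
  have hspI := hsp (X ∩ X') hIV hc
  have hspZ := hsp (X ∪ X') hZV
    (le_trans (by omega) (Finset.card_le_card Finset.subset_union_left))
  have hkey : iG E X + iG E X' ≤ iG E (X ∪ X') + iG E (X ∩ X') := by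
    have h1 := Finset.card_union_add_card_inter (inducedEdges E X) (inducedEdges E X')
    have h2 : (inducedEdges E X ∪ inducedEdges E X').card ≤ iG E (X ∪ X') :=
      Finset.card_le_card (induced_union_sub E X X')
    rw [induced_inter] at h1
    simp only [iG] at h2 ⊢
    omega
  have hcards := Finset.card_union_add_card_inter X X'
  have hZeq : iG E (X ∪ X') + Nat.choose (d+1) 2 = d * (X ∪ X').card := by nlinarith
  have hZcard : d + 2 ≤ (X ∪ X').card :=
    le_trans hXcard (Finset.card_le_card Finset.subset_union_left)
  have h1 : X ∪ X' = X := hXmax (X ∪ X') Finset.subset_union_left hZV hZcard hZeq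
  have hsub : X' ⊆ X := by
    intro v hv
    have hv2 : v ∈ X ∪ X' := Finset.mem_union.mpr (Or.inr hv)
    rwa [h1] at hv2
  exact hne (hX'max X hsub hXV hXcard hXiG)

/-- no hinges of size ≥ d -/
lemma theta_empty (hd : 2 ≤ d) (hsp : Sparse d V E) (hf : CoverFacts d V E 𝒳)
    {j : ℕ} (hj : d ≤ j) : theta V 𝒳 j = ∅ := by
  rw [Finset.eq_empty_iff_forall_notMem]
  intro U hU
  rw [theta, Finset.mem_filter] at hU
  obtain ⟨_, hcard, hdeg⟩ := hU
  rw [degX] at hdeg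
  obtain ⟨X, hX, X', hX', hne⟩ :=
    Finset.one_lt_card.mp (by omega : 1 < (𝒳.filter fun X => U ⊆ X).card)
  rw [Finset.mem_filter] at hX hX'
  have hsubI : U ⊆ X ∩ X' := Finset.subset_inter hX.2 hX'.2
  have := thin hd hsp hf X hX.1 X' hX'.1 hne
  have := Finset.card_le_card hsubI
  omega

end Part2

-- ============ part 3 : the counting identity ============
section Part3

variable {d : ℕ} {V : Finset α} {E : Finset (Sym2 α)} {𝒳 : Finset (Finset α)}

noncomputable def SW (𝒳 : Finset (Finset α)) (W : Finset α) : Finset (Finset α) :=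
  𝒳.filter fun X => W ⊆ X

noncomputable def YW (𝒳 : Finset (Finset α)) (W : Finset α) : Finset α :=
  (SW 𝒳 W).biUnion id

noncomputable def EWs (E : Finset (Sym2 α)) (𝒳 : Finset (Finset α)) (W : Finset α) :
    Finset (Sym2 α) :=
  E.filter fun e => ∃ X ∈ SW 𝒳 W, ends e ⊆ X

lemma SW_card (𝒳 : Finset (Finset α)) (W : Finset α) : (SW 𝒳 W).card = degX 𝒳 W := rfl

lemma mem_SW {W X : Finset α} : X ∈ SW 𝒳 W ↔ X ∈ 𝒳 ∧ W ⊆ X := Finset.mem_filter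

lemma subset_YW {W X : Finset α} (h : X ∈ SW 𝒳 W) : X ⊆ YW 𝒳 W :=
  Finset.subset_biUnion_of_mem id h

lemma YW_subset_V (hf : CoverFacts d V E 𝒳) (W : Finset α) : YW 𝒳 W ⊆ V := by
  intro v hv
  rw [YW, Finset.mem_biUnion] at hv
  obtain ⟨X, hX, hvX⟩ := hv
  exact (hf X (mem_SW.mp hX).1).1 hvX

lemma degv_eq (𝒳 : Finset (Finset α)) (W : Finset α) (v : α) :
    ((SW 𝒳 W).filter fun X => v ∈ X).card = degX 𝒳 (insert v W) := by
  rw [SW, Finset.filter_filter, degX]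
  congr 1
  apply Finset.filter_congr
  intro X _
  simp [Finset.insert_subset_iff, and_comm]

lemma dege_eq (𝒳 : Finset (Finset α)) (W : Finset α) (e : Sym2 α) :
    ((SW 𝒳 W).filter fun X => ends e ⊆ X).card = degX 𝒳 (W ∪ ends e) := by
  rw [SW, Finset.filter_filter, degX]
  congr 1
  apply Finset.filter_congr
  intro X _
  simp [Finset.union_subset_iff]

lemma degv_one {W : Finset α} {v : α} (hv : v ∈ YW 𝒳 W) : 1 ≤ degX 𝒳 (insert v W) := by
  rw [YW, Finset.mem_biUnion] at hv
  obtain ⟨X, hX, hvX⟩ := hv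
  rw [← degv_eq]
  exact Finset.card_pos.mpr ⟨X, Finset.mem_filter.mpr ⟨hX, hvX⟩⟩

lemma dege_one {W : Finset α} {e : Sym2 α} (he : e ∈ EWs E 𝒳 W) :
    1 ≤ degX 𝒳 (W ∪ ends e) := by
  rw [EWs, Finset.mem_filter] at he
  obtain ⟨-, X, hX, hXe⟩ := he
  rw [← dege_eq]
  exact Finset.card_pos.mpr ⟨X, Finset.mem_filter.mpr ⟨hX, hXe⟩⟩

lemma EWs_subset_induced (E : Finset (Sym2 α)) (𝒳 : Finset (Finset α)) (W : Finset α) :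
    EWs E 𝒳 W ⊆ inducedEdges E (YW 𝒳 W) := by
  intro e he
  rw [EWs, Finset.mem_filter] at he
  obtain ⟨heE, X, hX, hsub⟩ := he
  rw [inducedEdges, Finset.mem_filter]
  exact ⟨heE, fun v hv => subset_YW hX (hsub (mem_ends.mpr hv))⟩

/-- the master counting identity for the subfamily of members containing W -/
lemma L5eq (hf : CoverFacts d V E 𝒳) (W : Finset α) :
    d * (YW 𝒳 W).card + d * (∑ v ∈ YW 𝒳 W, (degX 𝒳 (insert v W) - 1))
      = degX 𝒳 W * Nat.choose (d+1) 2 + (EWs E 𝒳 W).card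
        + ∑ e ∈ EWs E 𝒳 W, (degX 𝒳 (W ∪ ends e) - 1) := by
  have hXmem : ∀ X ∈ SW 𝒳 W, X ∈ 𝒳 := fun X hX => (mem_SW.mp hX).1
  have hvx : ∑ X ∈ SW 𝒳 W, X.card = ∑ v ∈ YW 𝒳 W, degX 𝒳 (insert v W) := by
    calc ∑ X ∈ SW 𝒳 W, X.card
        = ∑ X ∈ SW 𝒳 W, ((YW 𝒳 W).filter fun v => v ∈ X).card := by
          apply Finset.sum_congr rfl
          intro X hX
          congr 1
          ext v
          simp only [Finset.mem_filter]
          exact ⟨fun h => ⟨subset_YW hX h, h⟩, fun h => h.2⟩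
      _ = ∑ v ∈ YW 𝒳 W, ((SW 𝒳 W).filter fun X => v ∈ X).card := double_count _ _ _
      _ = ∑ v ∈ YW 𝒳 W, degX 𝒳 (insert v W) :=
          Finset.sum_congr rfl fun v _ => degv_eq 𝒳 W v
  have hex : ∑ X ∈ SW 𝒳 W, iG E X = ∑ e ∈ EWs E 𝒳 W, degX 𝒳 (W ∪ ends e) := by
    calc ∑ X ∈ SW 𝒳 W, iG E X
        = ∑ X ∈ SW 𝒳 W, ((EWs E 𝒳 W).filter fun e => ends e ⊆ X).card := by
          apply Finset.sum_congr rfl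
          intro X hX
          rw [iG]
          congr 1
          ext e
          simp only [inducedEdges, EWs, Finset.mem_filter]
          constructor
          · rintro ⟨he, hX2⟩
            exact ⟨⟨he, X, hX, ends_subset_iff.mpr hX2⟩, ends_subset_iff.mpr hX2⟩
          · rintro ⟨⟨he, -⟩, h2⟩
            exact ⟨he, ends_subset_iff.mp h2⟩
      _ = ∑ e ∈ EWs E 𝒳 W, ((SW 𝒳 W).filter fun X => ends e ⊆ X).card := double_count _ _ _
      _ = ∑ e ∈ EWs E 𝒳 W, degX 𝒳 (W ∪ ends e) :=
          Finset.sum_congr rfl fun e _ => dege_eq 𝒳 W e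
  calc d * (YW 𝒳 W).card + d * ∑ v ∈ YW 𝒳 W, (degX 𝒳 (insert v W) - 1)
      = d * ∑ v ∈ YW 𝒳 W, degX 𝒳 (insert v W) := by
        rw [sum_eq_card_add_sub _ _ fun v hv => degv_one hv, Nat.mul_add]
    _ = d * ∑ X ∈ SW 𝒳 W, X.card := by rw [hvx]
    _ = ∑ X ∈ SW 𝒳 W, (iG E X + Nat.choose (d+1) 2) := by
        rw [Finset.mul_sum]
        exact Finset.sum_congr rfl fun X hX => ((hf X (hXmem X hX)).2.2.1).symm
    _ = (∑ X ∈ SW 𝒳 W, iG E X) + (SW 𝒳 W).card * Nat.choose (d+1) 2 := by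
        rw [Finset.sum_add_distrib, Finset.sum_const, smul_eq_mul]
    _ = (∑ e ∈ EWs E 𝒳 W, degX 𝒳 (W ∪ ends e)) + degX 𝒳 W * Nat.choose (d+1) 2 := by
        rw [hex, SW_card]
    _ = degX 𝒳 W * Nat.choose (d+1) 2 + (EWs E 𝒳 W).card
        + ∑ e ∈ EWs E 𝒳 W, (degX 𝒳 (W ∪ ends e) - 1) := by
        rw [sum_eq_card_add_sub _ _ fun e he => dege_one he]
        ring

/-- the subfamily inequality -/
lemma L5ineq (hsp : Sparse d V E) (hf : CoverFacts d V E 𝒳) {W : Finset α}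
    (hne : (SW 𝒳 W).Nonempty) :
    d * (∑ v ∈ YW 𝒳 W, (degX 𝒳 (insert v W) - 1)) + Nat.choose (d+1) 2
      ≤ degX 𝒳 W * Nat.choose (d+1) 2
        + ∑ e ∈ EWs E 𝒳 W, (degX 𝒳 (W ∪ ends e) - 1) := by
  obtain ⟨X0, hX0⟩ := hne
  have hbig0 := (hf X0 (mem_SW.mp hX0).1).2.1
  have hsubY : X0.card ≤ (YW 𝒳 W).card := Finset.card_le_card (subset_YW hX0)
  have h2 := hsp (YW 𝒳 W) (YW_subset_V hf W) (by omega)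
  have h3 : (EWs E 𝒳 W).card ≤ iG E (YW 𝒳 W) :=
    Finset.card_le_card (EWs_subset_induced E 𝒳 W)
  have h4 := L5eq hf W
  omega

/-- the strict subfamily inequality for the full family -/
lemma L5strict (hsp : Sparse d V E) (hf : CoverFacts d V E 𝒳) (h𝒳2 : 2 ≤ 𝒳.card) :
    d * (∑ v ∈ YW 𝒳 ∅, (degX 𝒳 (insert v ∅) - 1)) + Nat.choose (d+1) 2 + 1
      ≤ degX 𝒳 ∅ * Nat.choose (d+1) 2
        + ∑ e ∈ EWs E 𝒳 ∅, (degX 𝒳 (∅ ∪ ends e) - 1) := by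
  have hSW : SW 𝒳 (∅ : Finset α) = 𝒳 := by
    rw [SW]
    exact Finset.filter_true_of_mem fun X _ => Finset.empty_subset X
  obtain ⟨X1, hX1, X2, hX2, hne⟩ := Finset.one_lt_card.mp (by omega : 1 < 𝒳.card)
  have hX1m : X1 ∈ SW 𝒳 (∅ : Finset α) := by rw [hSW]; exact hX1
  have hX2m : X2 ∈ SW 𝒳 (∅ : Finset α) := by rw [hSW]; exact hX2
  have hYV := YW_subset_V hf (∅ : Finset α)
  have hcard : d + 2 ≤ (YW 𝒳 ∅).card :=
    le_trans (hf X1 hX1).2.1 (Finset.card_le_card (subset_YW hX1m))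
  have hstrict : iG E (YW 𝒳 ∅) + Nat.choose (d+1) 2 + 1 ≤ d * (YW 𝒳 ∅).card := by
    have h2 := hsp (YW 𝒳 ∅) hYV (by omega)
    rcases Nat.lt_or_ge (iG E (YW 𝒳 ∅) + Nat.choose (d+1) 2) (d * (YW 𝒳 ∅).card) with h | h
    · omega
    · exfalso
      have heq : iG E (YW 𝒳 ∅) + Nat.choose (d+1) 2 = d * (YW 𝒳 ∅).card :=
        le_antisymm h2 (by omega)
      have e1 : YW 𝒳 ∅ = X1 :=
        (hf X1 hX1).2.2.2.2 (YW 𝒳 ∅) (subset_YW hX1m) hYV hcard heq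
      have e2 : YW 𝒳 ∅ = X2 :=
        (hf X2 hX2).2.2.2.2 (YW 𝒳 ∅) (subset_YW hX2m) hYV hcard heq
      exact hne (e1.symm.trans e2)
  have h3 : (EWs E 𝒳 ∅).card ≤ iG E (YW 𝒳 ∅) :=
    Finset.card_le_card (EWs_subset_induced E 𝒳 ∅)
  have h4 := L5eq hf (∅ : Finset α)
  omega

end Part3

-- ============ part 4 : hinge sums and the summed inequalities ============
section Part4

variable {d : ℕ} {V : Finset α} {E : Finset (Sym2 α)} {𝒳 : Finset (Finset α)}

noncomputable def hA (V : Finset α) (𝒳 : Finset (Finset α)) (j : ℕ) : ℕ :=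
  ∑ U ∈ theta V 𝒳 j, (degX 𝒳 U - 1)

lemma mem_theta {U : Finset α} {j : ℕ} :
    U ∈ theta V 𝒳 j ↔ U ⊆ V ∧ U.card = j ∧ 2 ≤ degX 𝒳 U := by
  rw [theta, Finset.mem_filter, Finset.mem_powerset]

lemma degX_anti {U U' : Finset α} (h : U ⊆ U') : degX 𝒳 U' ≤ degX 𝒳 U := by
  apply Finset.card_le_card
  intro X hX
  rw [Finset.mem_filter] at hX ⊢
  exact ⟨hX.1, h.trans hX.2⟩

lemma degX_mem {U : Finset α} (h : 1 ≤ degX 𝒳 U) : ∃ X ∈ 𝒳, U ⊆ X := by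
  rw [degX] at h
  obtain ⟨X, hX⟩ := Finset.card_pos.mp h
  rw [Finset.mem_filter] at hX
  exact ⟨X, hX.1, hX.2⟩

/-- theta_j is empty for j ≥ d, so the hinge sum vanishes -/
lemma hA_eq_zero (hd : 2 ≤ d) (hsp : Sparse d V E) (hf : CoverFacts d V E 𝒳)
    {j : ℕ} (hj : d ≤ j) : hA V 𝒳 j = 0 := by
  rw [hA, theta_empty hd hsp hf hj, Finset.sum_empty]

/-- lower bound for the summed vertex terms -/
lemma vertex_lower (hf : CoverFacts d V E 𝒳) (w : ℕ) :
    (w+1) * hA V 𝒳 (w+1) + (w+2) * hA V 𝒳 (w+2)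
      ≤ ∑ W ∈ theta V 𝒳 (w+1), ∑ v ∈ YW 𝒳 W, (degX 𝒳 (insert v W) - 1) := by
  have hsplit : ∀ W ∈ theta V 𝒳 (w+1),
      ∑ v ∈ YW 𝒳 W, (degX 𝒳 (insert v W) - 1)
        = (∑ v ∈ YW 𝒳 W \ W, (degX 𝒳 (insert v W) - 1)) + (w+1) * (degX 𝒳 W - 1) := by
    intro W hW
    obtain ⟨hWV, hWcard, hWdeg⟩ := mem_theta.mp hW
    have hWY : W ⊆ YW 𝒳 W := by
      intro v hv
      obtain ⟨X, hX𝒳, hUX⟩ := degX_mem (by omega : 1 ≤ degX 𝒳 W)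
      exact Finset.mem_biUnion.mpr ⟨X, mem_SW.mpr ⟨hX𝒳, hUX⟩, hUX hv⟩
    rw [← Finset.sum_sdiff hWY]
    congr 1
    calc ∑ v ∈ W, (degX 𝒳 (insert v W) - 1) = ∑ v ∈ W, (degX 𝒳 W - 1) := by
          apply Finset.sum_congr rfl
          intro v hv
          rw [Finset.insert_eq_self.mpr hv]
      _ = W.card * (degX 𝒳 W - 1) := by rw [Finset.sum_const, smul_eq_mul]
      _ = (w+1) * (degX 𝒳 W - 1) := by rw [hWcard]
  rw [Finset.sum_congr rfl hsplit, Finset.sum_add_distrib]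
  have h1 : ∑ W ∈ theta V 𝒳 (w+1), (w+1) * (degX 𝒳 W - 1) = (w+1) * hA V 𝒳 (w+1) := by
    rw [hA, Finset.mul_sum]
  have h2 : (w+2) * hA V 𝒳 (w+2)
      ≤ ∑ W ∈ theta V 𝒳 (w+1), ∑ v ∈ YW 𝒳 W \ W, (degX 𝒳 (insert v W) - 1) := by
    have hsrc : (w+2) * hA V 𝒳 (w+2)
        = ∑ U ∈ theta V 𝒳 (w+2), ∑ _v ∈ U, (degX 𝒳 U - 1) := by
      rw [hA, Finset.mul_sum]
      apply Finset.sum_congr rfl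
      intro U hU
      rw [Finset.sum_const, smul_eq_mul, (mem_theta.mp hU).2.1]
    rw [hsrc,
      Finset.sum_sigma' (theta V 𝒳 (w+2)) (fun U => U) (fun U _ => degX 𝒳 U - 1),
      Finset.sum_sigma' (theta V 𝒳 (w+1)) (fun W => YW 𝒳 W \ W)
        (fun W v => degX 𝒳 (insert v W) - 1)]
    apply sum_le_sum_inj (fun p => (⟨p.1.erase p.2, p.2⟩ : (_ : Finset α) × α))
    · rintro ⟨U, v⟩ ha ⟨U', v'⟩ hb h
      rw [Finset.mem_sigma] at ha hb
      have hv2 : v ∈ U := ha.2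
      have hv2' : v' ∈ U' := hb.2
      obtain ⟨h1', h2'⟩ := Sigma.mk.inj_iff.mp h
      have hv : v = v' := eq_of_heq h2'
      subst hv
      have h1'' : U.erase v = U'.erase v := h1'
      have hU : U = U' := by
        rw [← Finset.insert_erase hv2, ← Finset.insert_erase hv2', h1'']
      subst hU
      rfl
    · rintro ⟨U, v⟩ ha
      rw [Finset.mem_sigma] at ha ⊢
      obtain ⟨hU, hv⟩ := ha
      have hU' : U ∈ theta V 𝒳 (w+2) := hU
      have hv' : v ∈ U := hv
      obtain ⟨hUV, hUcard, hUdeg⟩ := mem_theta.mp hU'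
      refine ⟨mem_theta.mpr ⟨(Finset.erase_subset v U).trans hUV, ?_, ?_⟩, ?_⟩
      · rw [Finset.card_erase_of_mem hv', hUcard]
        omega
      · exact le_trans hUdeg (degX_anti (Finset.erase_subset v U))
      · rw [Finset.mem_sdiff]
        refine ⟨?_, Finset.notMem_erase v U⟩
        obtain ⟨X, hX𝒳, hUX⟩ := degX_mem (by omega : 1 ≤ degX 𝒳 U)
        exact Finset.mem_biUnion.mpr
          ⟨X, mem_SW.mpr ⟨hX𝒳, (Finset.erase_subset v U).trans hUX⟩, hUX hv'⟩
    · rintro ⟨U, v⟩ ha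
      rw [Finset.mem_sigma] at ha
      have hv' : v ∈ U := ha.2
      show degX 𝒳 U - 1 = degX 𝒳 (insert v (U.erase v)) - 1
      rw [Finset.insert_erase hv']
  omega

noncomputable def B2 (E : Finset (Sym2 α)) (𝒳 : Finset (Finset α)) (W : Finset α) :
    Finset (Sym2 α) := (EWs E 𝒳 W).filter (fun e => ends e ⊆ W)

noncomputable def B1 (E : Finset (Sym2 α)) (𝒳 : Finset (Finset α)) (W : Finset α) :
    Finset (Sym2 α) :=
  (EWs E 𝒳 W).filter (fun e => (¬ ends e ⊆ W) ∧ (ends e ∩ W).Nonempty)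

noncomputable def B0 (E : Finset (Sym2 α)) (𝒳 : Finset (Finset α)) (W : Finset α) :
    Finset (Sym2 α) :=
  (EWs E 𝒳 W).filter (fun e => (¬ ends e ⊆ W) ∧ ¬ (ends e ∩ W).Nonempty)

lemma bucket_split (E : Finset (Sym2 α)) (𝒳 : Finset (Finset α)) (W : Finset α)
    (t : Sym2 α → ℕ) :
    ∑ e ∈ EWs E 𝒳 W, t e
      = ∑ e ∈ B2 E 𝒳 W, t e + ∑ e ∈ B1 E 𝒳 W, t e + ∑ e ∈ B0 E 𝒳 W, t e := by
  rw [B2, B1, B0, add_assoc]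
  rw [← Finset.sum_filter_add_sum_filter_not (EWs E 𝒳 W) (fun e => ends e ⊆ W) t]
  congr 1
  rw [← Finset.sum_filter_add_sum_filter_not
    ((EWs E 𝒳 W).filter (fun e => ¬ ends e ⊆ W)) (fun e => (ends e ∩ W).Nonempty) t,
    Finset.filter_filter, Finset.filter_filter]

lemma hb2 (hval : ValidOn V E) (w : ℕ) :
    ∑ W ∈ theta V 𝒳 (w+1), ∑ e ∈ B2 E 𝒳 W, (degX 𝒳 (W ∪ ends e) - 1)
      ≤ (w+1).choose 2 * hA V 𝒳 (w+1) := by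
  rw [hA, Finset.mul_sum]
  apply Finset.sum_le_sum
  intro W hW
  obtain ⟨hWV, hWcard, _⟩ := mem_theta.mp hW
  calc ∑ e ∈ B2 E 𝒳 W, (degX 𝒳 (W ∪ ends e) - 1)
      = ∑ e ∈ B2 E 𝒳 W, (degX 𝒳 W - 1) := by
        apply Finset.sum_congr rfl
        intro e he
        rw [Finset.union_eq_left.mpr (Finset.mem_filter.mp he).2]
    _ = (B2 E 𝒳 W).card * (degX 𝒳 W - 1) := by rw [Finset.sum_const, smul_eq_mul]
    _ ≤ (w+1).choose 2 * (degX 𝒳 W - 1) := by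
        apply Nat.mul_le_mul_right
        have hsub : B2 E 𝒳 W ⊆ E.filter (fun e => ends e ⊆ W) :=
          Finset.filter_subset_filter _ (Finset.filter_subset _ _)
        calc (B2 E 𝒳 W).card ≤ (E.filter (fun e => ends e ⊆ W)).card :=
              Finset.card_le_card hsub
          _ ≤ W.card.choose 2 := edges_inside_le E (fun e he => (hval e he).1) W
          _ = (w+1).choose 2 := by rw [hWcard]

lemma ends_in_V (hval : ValidOn V E) {e : Sym2 α} (he : e ∈ E) : ends e ⊆ V :=
  ends_subset_iff.mpr (hval e he).2

lemma EWs_mem_E {W : Finset α} {e : Sym2 α} (he : e ∈ EWs E 𝒳 W) : e ∈ E :=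
  (Finset.mem_filter.mp he).1

lemma erase_union_ends {W T : Finset α} {u : α} (h : T \ W = {u}) :
    (W ∪ T).erase u = W := by
  have hu : u ∉ W := by
    have h2 : u ∈ T \ W := by rw [h]; exact Finset.mem_singleton_self u
    exact (Finset.mem_sdiff.mp h2).2
  ext x
  simp only [Finset.mem_erase, Finset.mem_union]
  constructor
  · rintro ⟨hxu, hx | hx⟩
    · exact hx
    · by_cases hxW : x ∈ W
      · exact hxW
      · exfalso
        have : x ∈ T \ W := Finset.mem_sdiff.mpr ⟨hx, hxW⟩
        rw [h, Finset.mem_singleton] at this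
        exact hxu this
  · intro hx
    exact ⟨fun hxu => hu (hxu ▸ hx), Or.inl hx⟩

lemma hb1 (hval : ValidOn V E) (w : ℕ) :
    ∑ W ∈ theta V 𝒳 (w+1), ∑ e ∈ B1 E 𝒳 W, (degX 𝒳 (W ∪ ends e) - 1)
      ≤ (w+2) * (w+1) * hA V 𝒳 (w+2) := by
  -- facts about members of B1
  have hfacts : ∀ W ∈ theta V 𝒳 (w+1), ∀ e ∈ B1 E 𝒳 W,
      (ends e \ W).card = 1 ∧ (W ∪ ends e).card = w + 2 ∧ e ∈ E := by
    intro W hW e he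
    obtain ⟨hWV, hWcard, _⟩ := mem_theta.mp hW
    rw [B1, Finset.mem_filter] at he
    obtain ⟨heW, hnsub, hint⟩ := he
    have heE : e ∈ E := EWs_mem_E heW
    have hce : (ends e).card = 2 := card_ends (hval e heE).1
    have hii := Finset.card_sdiff_add_card_inter (ends e) W
    have hintc : (ends e ∩ W).card = 1 := by
      have h1 : 1 ≤ (ends e ∩ W).card := Finset.card_pos.mpr hint
      have h2 : (ends e ∩ W).card ≤ 2 := by
        rw [← hce]; exact Finset.card_le_card (Finset.inter_subset_left)
      rcases Nat.lt_or_ge (ends e ∩ W).card 2 with h | h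
      · omega
      · exfalso
        have : ends e ∩ W = ends e :=
          Finset.eq_of_subset_of_card_le (Finset.inter_subset_left) (by omega)
        exact hnsub (by rw [← this]; exact Finset.inter_subset_right)
    have hsd : (ends e \ W).card = 1 := by omega
    have huc : (W ∪ ends e).card = w + 2 := by
      have h3 : W ∪ ends e = W ∪ (ends e \ W) := by
        rw [Finset.union_sdiff_self_eq_union]
      rw [h3, Finset.card_union_of_disjoint Finset.disjoint_sdiff, hWcard, hsd]
    exact ⟨hsd, huc, heE⟩
  -- rewrite each inner sum with the u-layer
  have hper : ∀ W ∈ theta V 𝒳 (w+1),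
      ∑ e ∈ B1 E 𝒳 W, (degX 𝒳 (W ∪ ends e) - 1)
        = ∑ e ∈ (B1 E 𝒳 W).filter (fun e => 2 ≤ degX 𝒳 (W ∪ ends e)),
            ∑ _u ∈ ends e \ W, (degX 𝒳 (W ∪ ends e) - 1) := by
    intro W hW
    rw [sum_sub_one_filter (B1 E 𝒳 W) (fun e => degX 𝒳 (W ∪ ends e))]
    apply Finset.sum_congr rfl
    intro e he
    have hsd := (hfacts W hW e (Finset.mem_filter.mp he).1).1
    rw [Finset.sum_const, hsd, one_smul]
  rw [Finset.sum_congr rfl hper]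
  -- convert to a sigma-of-sigma sum
  have hconv : ∀ W ∈ theta V 𝒳 (w+1),
      ∑ e ∈ (B1 E 𝒳 W).filter (fun e => 2 ≤ degX 𝒳 (W ∪ ends e)),
          ∑ _u ∈ ends e \ W, (degX 𝒳 (W ∪ ends e) - 1)
        = ∑ q ∈ ((B1 E 𝒳 W).filter (fun e => 2 ≤ degX 𝒳 (W ∪ ends e))).sigma
            (fun e => ends e \ W), (degX 𝒳 (W ∪ ends q.1) - 1) := by
    intro W _
    rw [Finset.sum_sigma]
  rw [Finset.sum_congr rfl hconv,
    Finset.sum_sigma' (theta V 𝒳 (w+1))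
      (fun W => ((B1 E 𝒳 W).filter (fun e => 2 ≤ degX 𝒳 (W ∪ ends e))).sigma
        (fun e => ends e \ W))
      (fun W q => degX 𝒳 (W ∪ ends q.1) - 1)]
  -- the target sum
  have htarget : ∑ p ∈ (theta V 𝒳 (w+2)).sigma
        (fun U => (E.filter (fun e => ends e ⊆ U)).sigma (fun e => ends e)),
        (degX 𝒳 p.1 - 1) ≤ (w+2) * (w+1) * hA V 𝒳 (w+2) := by
    rw [Finset.sum_sigma, hA, Finset.mul_sum]
    apply Finset.sum_le_sum
    intro U hU
    obtain ⟨hUV, hUcard, _⟩ := mem_theta.mp hU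
    show (∑ _s ∈ (E.filter (fun e => ends e ⊆ U)).sigma (fun e => ends e),
      (degX 𝒳 U - 1)) ≤ (w+2) * (w+1) * (degX 𝒳 U - 1)
    rw [Finset.sum_const, smul_eq_mul, Finset.card_sigma]
    have hcs : ∑ e ∈ E.filter (fun e => ends e ⊆ U), (ends e).card
        = (E.filter (fun e => ends e ⊆ U)).card * 2 := by
      rw [Finset.sum_congr rfl
        (fun e he => card_ends (hval e (Finset.mem_filter.mp he).1).1),
        Finset.sum_const, smul_eq_mul]
    rw [hcs]
    have hle : (E.filter (fun e => ends e ⊆ U)).card ≤ (w+2).choose 2 := by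
      have := edges_inside_le E (fun e he => (hval e he).1) U
      rwa [hUcard] at this
    have h2 := two_mul_choose_two (w+2)
    have hw1 : (w:ℕ) + 2 - 1 = w + 1 := by omega
    rw [hw1] at h2
    calc (E.filter (fun e => ends e ⊆ U)).card * 2 * (degX 𝒳 U - 1)
        ≤ (w+2).choose 2 * 2 * (degX 𝒳 U - 1) := by
          apply Nat.mul_le_mul_right
          exact Nat.mul_le_mul_right 2 hle
      _ = (w+2) * (w+1) * (degX 𝒳 U - 1) := by
          rw [show (w+2).choose 2 * 2 = 2 * (w+2).choose 2 by ring, h2]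
  refine le_trans ?_ htarget
  -- the injection
  apply sum_le_sum_inj (fun p => (⟨p.1 ∪ ends p.2.1, p.2.1, p.2.2⟩ :
    (U : Finset α) × (_ : Sym2 α) × α))
  · rintro ⟨W, e, u⟩ ha ⟨W', e', u'⟩ hb h
    rw [Finset.mem_sigma] at ha hb
    have haW : W ∈ theta V 𝒳 (w+1) := ha.1
    have hbW : W' ∈ theta V 𝒳 (w+1) := hb.1
    have ha2 : (⟨e, u⟩ : (_ : Sym2 α) × α) ∈
        ((B1 E 𝒳 W).filter (fun e => 2 ≤ degX 𝒳 (W ∪ ends e))).sigma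
          (fun e => ends e \ W) := ha.2
    have hb2' : (⟨e', u'⟩ : (_ : Sym2 α) × α) ∈
        ((B1 E 𝒳 W').filter (fun e => 2 ≤ degX 𝒳 (W' ∪ ends e))).sigma
          (fun e => ends e \ W') := hb.2
    rw [Finset.mem_sigma] at ha2 hb2'
    obtain ⟨h1', h2'⟩ := Sigma.mk.inj_iff.mp h
    have h3' := Sigma.mk.inj_iff.mp (eq_of_heq h2')
    have he : e = e' := h3'.1
    subst he
    have hu : u = u' := eq_of_heq h3'.2
    subst hu
    have hea : e ∈ (B1 E 𝒳 W).filter (fun e => 2 ≤ degX 𝒳 (W ∪ ends e)) := ha2.1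
    have hua : u ∈ ends e \ W := ha2.2
    have heb : e ∈ (B1 E 𝒳 W').filter (fun e => 2 ≤ degX 𝒳 (W' ∪ ends e)) := hb2'.1
    have hub : u ∈ ends e \ W' := hb2'.2
    have hsd1 := (hfacts W haW e (Finset.mem_filter.mp hea).1).1
    have hsd2 := (hfacts W' hbW e (Finset.mem_filter.mp heb).1).1
    have hu1 : ends e \ W = {u} := by
      obtain ⟨a, haa⟩ := Finset.card_eq_one.mp hsd1
      rw [haa, Finset.mem_singleton] at hua
      rw [haa, hua]
    have hu2 : ends e \ W' = {u} := by
      obtain ⟨a, haa⟩ := Finset.card_eq_one.mp hsd2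
      rw [haa, Finset.mem_singleton] at hub
      rw [haa, hub]
    have hW : W = W' := by
      rw [← erase_union_ends hu1, ← erase_union_ends hu2, h1']
    subst hW
    rfl
  · rintro ⟨W, e, u⟩ ha
    rw [Finset.mem_sigma] at ha
    have haW : W ∈ theta V 𝒳 (w+1) := ha.1
    have ha2 : (⟨e, u⟩ : (_ : Sym2 α) × α) ∈
        ((B1 E 𝒳 W).filter (fun e => 2 ≤ degX 𝒳 (W ∪ ends e))).sigma
          (fun e => ends e \ W) := ha.2
    rw [Finset.mem_sigma] at ha2
    have he : e ∈ (B1 E 𝒳 W).filter (fun e => 2 ≤ degX 𝒳 (W ∪ ends e)) := ha2.1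
    have hu : u ∈ ends e \ W := ha2.2
    rw [Finset.mem_filter] at he
    obtain ⟨heB1, hdeg2⟩ := he
    obtain ⟨hsd, hcardU, heE⟩ := hfacts W haW e heB1
    obtain ⟨hWV, hWcard, _⟩ := mem_theta.mp haW
    rw [Finset.mem_sigma]
    constructor
    · rw [mem_theta]
      exact ⟨Finset.union_subset hWV (ends_in_V hval heE), hcardU, hdeg2⟩
    · rw [Finset.mem_sigma]
      constructor
      · rw [Finset.mem_filter]
        exact ⟨heE, Finset.subset_union_right⟩
      · exact (Finset.mem_sdiff.mp hu).1
  · rintro ⟨W, e, u⟩ _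
    rfl

lemma hb0 (hval : ValidOn V E) (w : ℕ) :
    ∑ W ∈ theta V 𝒳 (w+1), ∑ e ∈ B0 E 𝒳 W, (degX 𝒳 (W ∪ ends e) - 1)
      ≤ (w+3).choose 2 * hA V 𝒳 (w+3) := by
  have hfacts : ∀ W ∈ theta V 𝒳 (w+1), ∀ e ∈ B0 E 𝒳 W,
      Disjoint W (ends e) ∧ (W ∪ ends e).card = w + 3 ∧ e ∈ E := by
    intro W hW e he
    obtain ⟨hWV, hWcard, _⟩ := mem_theta.mp hW
    rw [B0, Finset.mem_filter] at he
    obtain ⟨heW, _, hint⟩ := he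
    have heE : e ∈ E := EWs_mem_E heW
    have hce : (ends e).card = 2 := card_ends (hval e heE).1
    have hdisj : Disjoint W (ends e) := by
      rw [Finset.disjoint_iff_inter_eq_empty, Finset.inter_comm]
      exact Finset.not_nonempty_iff_eq_empty.mp hint
    have huc : (W ∪ ends e).card = w + 3 := by
      rw [Finset.card_union_of_disjoint hdisj, hWcard, hce]
    exact ⟨hdisj, huc, heE⟩
  have hper : ∀ W ∈ theta V 𝒳 (w+1),
      ∑ e ∈ B0 E 𝒳 W, (degX 𝒳 (W ∪ ends e) - 1)
        = ∑ e ∈ (B0 E 𝒳 W).filter (fun e => 2 ≤ degX 𝒳 (W ∪ ends e)),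
            (degX 𝒳 (W ∪ ends e) - 1) :=
    fun W _ => sum_sub_one_filter (B0 E 𝒳 W) (fun e => degX 𝒳 (W ∪ ends e))
  rw [Finset.sum_congr rfl hper,
    Finset.sum_sigma' (theta V 𝒳 (w+1))
      (fun W => (B0 E 𝒳 W).filter (fun e => 2 ≤ degX 𝒳 (W ∪ ends e)))
      (fun W e => degX 𝒳 (W ∪ ends e) - 1)]
  have htarget : ∑ p ∈ (theta V 𝒳 (w+3)).sigma
        (fun U => E.filter (fun e => ends e ⊆ U)), (degX 𝒳 p.1 - 1)
      ≤ (w+3).choose 2 * hA V 𝒳 (w+3) := by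
    rw [Finset.sum_sigma, hA, Finset.mul_sum]
    apply Finset.sum_le_sum
    intro U hU
    obtain ⟨hUV, hUcard, _⟩ := mem_theta.mp hU
    show (∑ _e ∈ E.filter (fun e => ends e ⊆ U), (degX 𝒳 U - 1))
      ≤ (w+3).choose 2 * (degX 𝒳 U - 1)
    rw [Finset.sum_const, smul_eq_mul]
    apply Nat.mul_le_mul_right
    have := edges_inside_le E (fun e he => (hval e he).1) U
    rwa [hUcard] at this
  refine le_trans ?_ htarget
  apply sum_le_sum_inj (fun p => (⟨p.1 ∪ ends p.2, p.2⟩ : (_ : Finset α) × Sym2 α))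
  · rintro ⟨W, e⟩ ha ⟨W', e'⟩ hb h
    rw [Finset.mem_sigma] at ha hb
    obtain ⟨h1', h2'⟩ := Sigma.mk.inj_iff.mp h
    have he : e = e' := eq_of_heq h2'
    subst he
    have hea : e ∈ (B0 E 𝒳 W).filter (fun e => 2 ≤ degX 𝒳 (W ∪ ends e)) := ha.2
    have heb : e ∈ (B0 E 𝒳 W').filter (fun e => 2 ≤ degX 𝒳 (W' ∪ ends e)) := hb.2
    have hd1 := (hfacts W ha.1 e (Finset.mem_filter.mp hea).1).1
    have hd2 := (hfacts W' hb.1 e (Finset.mem_filter.mp heb).1).1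
    have e1 : W = (W ∪ ends e) \ ends e := (Finset.union_sdiff_cancel_right hd1).symm
    have e2 : W' = (W' ∪ ends e) \ ends e := (Finset.union_sdiff_cancel_right hd2).symm
    have hW : W = W' := by rw [e1, e2, h1']
    subst hW
    rfl
  · rintro ⟨W, e⟩ ha
    rw [Finset.mem_sigma] at ha
    have hW : W ∈ theta V 𝒳 (w+1) := ha.1
    have he : e ∈ (B0 E 𝒳 W).filter (fun e => 2 ≤ degX 𝒳 (W ∪ ends e)) := ha.2
    rw [Finset.mem_filter] at he
    obtain ⟨heB0, hdeg2⟩ := he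
    obtain ⟨hdisj, hcardU, heE⟩ := hfacts W hW e heB0
    obtain ⟨hWV, hWcard, _⟩ := mem_theta.mp hW
    rw [Finset.mem_sigma]
    constructor
    · rw [mem_theta]
      exact ⟨Finset.union_subset hWV (ends_in_V hval heE), hcardU, hdeg2⟩
    · rw [Finset.mem_filter]
      exact ⟨heE, Finset.subset_union_right⟩
  · rintro ⟨W, e⟩ _
    rfl

/-- the summed inequality I_j (for j = w+2 ≥ 2, with W ranging over (w+1)-hinges) -/
lemma Ij (hval : ValidOn V E) (hsp : Sparse d V E) (hf : CoverFacts d V E 𝒳) (w : ℕ) :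
    d * ((w+1) * hA V 𝒳 (w+1) + (w+2) * hA V 𝒳 (w+2))
      ≤ (Nat.choose (d+1) 2 + (w+1).choose 2) * hA V 𝒳 (w+1)
        + (w+2)*(w+1) * hA V 𝒳 (w+2) + (w+3).choose 2 * hA V 𝒳 (w+3) := by
  have hsum : ∀ W ∈ theta V 𝒳 (w+1),
      d * (∑ v ∈ YW 𝒳 W, (degX 𝒳 (insert v W) - 1)) + Nat.choose (d+1) 2
        ≤ degX 𝒳 W * Nat.choose (d+1) 2
          + ∑ e ∈ EWs E 𝒳 W, (degX 𝒳 (W ∪ ends e) - 1) := by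
    intro W hW
    obtain ⟨_, _, hdeg⟩ := mem_theta.mp hW
    apply L5ineq hsp hf
    rw [← Finset.card_pos, SW_card]
    omega
  have h0 := Finset.sum_le_sum hsum
  rw [Finset.sum_add_distrib, Finset.sum_add_distrib, ← Finset.mul_sum,
    Finset.sum_const, smul_eq_mul] at h0
  have hv : (w+1) * hA V 𝒳 (w+1) + (w+2) * hA V 𝒳 (w+2)
      ≤ ∑ W ∈ theta V 𝒳 (w+1), ∑ v ∈ YW 𝒳 W, (degX 𝒳 (insert v W) - 1) :=
    vertex_lower hf w
  have hv' := Nat.mul_le_mul_left d hv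
  have hdegsum : ∑ W ∈ theta V 𝒳 (w+1), degX 𝒳 W * Nat.choose (d+1) 2
      = hA V 𝒳 (w+1) * Nat.choose (d+1) 2
        + (theta V 𝒳 (w+1)).card * Nat.choose (d+1) 2 := by
    rw [← Finset.sum_mul, ← Nat.add_mul]
    congr 1
    rw [sum_eq_card_add_sub _ _ (fun W hW => by
      have := (mem_theta.mp hW).2.2; omega), hA]
    omega
  rw [hdegsum] at h0
  have hse : ∑ W ∈ theta V 𝒳 (w+1), ∑ e ∈ EWs E 𝒳 W, (degX 𝒳 (W ∪ ends e) - 1)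
      ≤ (w+1).choose 2 * hA V 𝒳 (w+1) + (w+2)*(w+1) * hA V 𝒳 (w+2)
        + (w+3).choose 2 * hA V 𝒳 (w+3) := by
    have hbs : ∑ W ∈ theta V 𝒳 (w+1), ∑ e ∈ EWs E 𝒳 W, (degX 𝒳 (W ∪ ends e) - 1)
        = ∑ W ∈ theta V 𝒳 (w+1), (∑ e ∈ B2 E 𝒳 W, (degX 𝒳 (W ∪ ends e) - 1)
          + ∑ e ∈ B1 E 𝒳 W, (degX 𝒳 (W ∪ ends e) - 1)
          + ∑ e ∈ B0 E 𝒳 W, (degX 𝒳 (W ∪ ends e) - 1)) :=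
      Finset.sum_congr rfl fun W _ => bucket_split E 𝒳 W _
    rw [hbs, Finset.sum_add_distrib, Finset.sum_add_distrib]
    exact add_le_add (add_le_add (hb2 hval w) (hb1 hval w)) (hb0 hval w)
  linarith

/-- the strict base inequality I_1 -/
lemma I1 (hval : ValidOn V E) (hsp : Sparse d V E) (hf : CoverFacts d V E 𝒳)
    (h𝒳2 : 2 ≤ 𝒳.card) :
    d * hA V 𝒳 1 + Nat.choose (d+1) 2 + 1
      ≤ 𝒳.card * Nat.choose (d+1) 2 + hA V 𝒳 2 := by
  have h := L5strict hsp hf h𝒳2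
  have hdeg0 : degX 𝒳 (∅ : Finset α) = 𝒳.card := by
    rw [degX]
    congr 1
    exact Finset.filter_true_of_mem fun X _ => Finset.empty_subset X
  have hA1 : hA V 𝒳 1 ≤ ∑ v ∈ YW 𝒳 ∅, (degX 𝒳 (insert v ∅) - 1) := by
    have hsrc : hA V 𝒳 1 = ∑ U ∈ theta V 𝒳 1, ∑ _v ∈ U, (degX 𝒳 U - 1) := by
      rw [hA]
      apply Finset.sum_congr rfl
      intro U hU
      rw [Finset.sum_const, (mem_theta.mp hU).2.1, one_smul]
    rw [hsrc, Finset.sum_sigma' (theta V 𝒳 1) (fun U => U) (fun U _ => degX 𝒳 U - 1)]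
    apply sum_le_sum_inj (fun p => p.2)
    · rintro ⟨U, v⟩ ha ⟨U', v'⟩ hb h'
      rw [Finset.mem_sigma] at ha hb
      have hU : U ∈ theta V 𝒳 1 := ha.1
      have hU' : U' ∈ theta V 𝒳 1 := hb.1
      have hv : v ∈ U := ha.2
      have hv' : v' ∈ U' := hb.2
      have hvv : v = v' := h'
      subst hvv
      obtain ⟨a, haa⟩ := Finset.card_eq_one.mp (mem_theta.mp hU).2.1
      obtain ⟨b, hbb⟩ := Finset.card_eq_one.mp (mem_theta.mp hU').2.1
      rw [haa, Finset.mem_singleton] at hv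
      rw [hbb, Finset.mem_singleton] at hv'
      subst hv
      subst hv'
      rw [haa, hbb]
    · rintro ⟨U, v⟩ ha
      rw [Finset.mem_sigma] at ha
      have hU : U ∈ theta V 𝒳 1 := ha.1
      have hv : v ∈ U := ha.2
      obtain ⟨_, hcard, hdeg⟩ := mem_theta.mp hU
      obtain ⟨X, hX𝒳, hUX⟩ := degX_mem (by omega : 1 ≤ degX 𝒳 U)
      exact Finset.mem_biUnion.mpr
        ⟨X, mem_SW.mpr ⟨hX𝒳, Finset.empty_subset X⟩, hUX hv⟩
    · rintro ⟨U, v⟩ ha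
      rw [Finset.mem_sigma] at ha
      have hU : U ∈ theta V 𝒳 1 := ha.1
      have hv : v ∈ U := ha.2
      obtain ⟨a, haa⟩ := Finset.card_eq_one.mp (mem_theta.mp hU).2.1
      rw [haa, Finset.mem_singleton] at hv
      show degX 𝒳 U - 1 = degX 𝒳 (insert v ∅) - 1
      subst hv
      rw [haa]
      rfl
  have hA2 : ∑ e ∈ EWs E 𝒳 ∅, (degX 𝒳 (∅ ∪ ends e) - 1) ≤ hA V 𝒳 2 := by
    rw [sum_sub_one_filter (EWs E 𝒳 ∅) (fun e => degX 𝒳 (∅ ∪ ends e)), hA]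
    apply sum_le_sum_inj (fun e => ends e)
    · intro e _ e' _ h'
      exact ends_inj h'
    · intro e he
      rw [Finset.mem_filter] at he
      obtain ⟨heW, hdeg⟩ := he
      have heE := EWs_mem_E heW
      rw [mem_theta]
      refine ⟨ends_in_V hval heE, card_ends (hval e heE).1, ?_⟩
      rwa [Finset.empty_union] at hdeg
    · intro e _
      rw [Finset.empty_union]
  have hd' := Nat.mul_le_mul_left d hA1
  rw [hdeg0] at h
  linarith

end Part4

-- ============ part 5 : arithmetic identities ============
section Part5

def Tf (d j : ℕ) : ℕ := (d - j) * Nat.choose (d+1) j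

lemma factorial_cast_succ1 (n : ℕ) : (((n+1).factorial : ℚ)) = (n+1) * (n.factorial : ℚ) := by
  exact_mod_cast congrArg (Nat.cast (R := ℚ)) (Nat.factorial_succ n)

lemma eigen' (w i : ℕ) :
    (w+2)*(i+2)*((i+1) * Nat.choose (w+i+4) (w+2))
      = Nat.choose (i+3) 2 * ((i+2) * Nat.choose (w+i+4) (w+1))
        + Nat.choose (w+3) 2 * (i * Nat.choose (w+i+4) (w+3)) := by
  have key : (((w+2)*(i+2)*((i+1) * Nat.choose (w+i+4) (w+2))) : ℚ)
      = ((Nat.choose (i+3) 2 * ((i+2) * Nat.choose (w+i+4) (w+1))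
        + Nat.choose (w+3) 2 * (i * Nat.choose (w+i+4) (w+3))) : ℚ) := by
    have c1 : ((Nat.choose (w+i+4) (w+2) : ℚ))
        = ((w+i+4).factorial : ℚ) / (((w+2).factorial : ℚ) * ((i+2).factorial : ℚ)) := by
      have e : w+i+4-(w+2) = i+2 := by omega
      rw [Nat.cast_choose ℚ (by omega : w+2 ≤ w+i+4), e]
    have c2 : ((Nat.choose (w+i+4) (w+1) : ℚ))
        = ((w+i+4).factorial : ℚ) / (((w+1).factorial : ℚ) * ((i+3).factorial : ℚ)) := by
      have e : w+i+4-(w+1) = i+3 := by omega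
      rw [Nat.cast_choose ℚ (by omega : w+1 ≤ w+i+4), e]
    have c3 : ((Nat.choose (w+i+4) (w+3) : ℚ))
        = ((w+i+4).factorial : ℚ) / (((w+3).factorial : ℚ) * ((i+1).factorial : ℚ)) := by
      have e : w+i+4-(w+3) = i+1 := by omega
      rw [Nat.cast_choose ℚ (by omega : w+3 ≤ w+i+4), e]
    have c4 : ((Nat.choose (i+3) 2 : ℚ)) = ((i+3) * (i+2) : ℚ) / 2 := by
      rw [Nat.cast_choose ℚ (by omega : 2 ≤ i+3)]
      have e1 : (i:ℕ)+3-2 = i+1 := by omega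
      rw [e1]
      have e2 : ((i+3).factorial : ℚ) = ((i:ℚ)+3) * (((i:ℚ)+2) * ((i+1).factorial : ℚ)) := by
        have g1 := factorial_cast_succ1 (i+2)
        have g2 := factorial_cast_succ1 (i+1)
        rw [show i+2+1 = i+3 by omega] at g1
        rw [show i+1+1 = i+2 by omega] at g2
        rw [g1, g2]
        push_cast
        ring
      rw [e2]
      have e3 : ((Nat.factorial 2 : ℕ) : ℚ) = 2 := by norm_num [Nat.factorial]
      rw [e3]
      have hne : ((i+1).factorial : ℚ) ≠ 0 := by
        exact_mod_cast Nat.factorial_ne_zero (i+1)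
      field_simp
    have c5 : ((Nat.choose (w+3) 2 : ℚ)) = ((w+3) * (w+2) : ℚ) / 2 := by
      rw [Nat.cast_choose ℚ (by omega : 2 ≤ w+3)]
      have e1 : (w:ℕ)+3-2 = w+1 := by omega
      rw [e1]
      have e2 : ((w+3).factorial : ℚ) = ((w:ℚ)+3) * (((w:ℚ)+2) * ((w+1).factorial : ℚ)) := by
        have g1 := factorial_cast_succ1 (w+2)
        have g2 := factorial_cast_succ1 (w+1)
        rw [show w+2+1 = w+3 by omega] at g1
        rw [show w+1+1 = w+2 by omega] at g2
        rw [g1, g2]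
        push_cast
        ring
      rw [e2]
      have e3 : ((Nat.factorial 2 : ℕ) : ℚ) = 2 := by norm_num [Nat.factorial]
      rw [e3]
      have hne : ((w+1).factorial : ℚ) ≠ 0 := by
        exact_mod_cast Nat.factorial_ne_zero (w+1)
      field_simp
    push_cast
    rw [c1, c2, c3, c4, c5]
    have f1 : ((w+2).factorial : ℚ) = ((w:ℚ)+2) * ((w+1).factorial : ℚ) := by
      have g := factorial_cast_succ1 (w+1)
      rw [show w+1+1 = w+2 by omega] at g
      rw [g]
      push_cast
      ring
    have f2 : ((w+3).factorial : ℚ) = ((w:ℚ)+3) * (((w:ℚ)+2) * ((w+1).factorial : ℚ)) := by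
      have g := factorial_cast_succ1 (w+2)
      rw [show w+2+1 = w+3 by omega] at g
      rw [g, f1]
      push_cast
      ring
    have f3 : ((i+2).factorial : ℚ) = ((i:ℚ)+2) * ((i+1).factorial : ℚ) := by
      have g := factorial_cast_succ1 (i+1)
      rw [show i+1+1 = i+2 by omega] at g
      rw [g]
      push_cast
      ring
    have f4 : ((i+3).factorial : ℚ) = ((i:ℚ)+3) * (((i:ℚ)+2) * ((i+1).factorial : ℚ)) := by
      have g := factorial_cast_succ1 (i+2)
      rw [show i+2+1 = i+3 by omega] at g
      rw [g, f3]
      push_cast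
      ring
    rw [f1, f2, f3, f4]
    have hx : ((w+1).factorial : ℚ) ≠ 0 := by
      exact_mod_cast Nat.factorial_ne_zero (w+1)
    have hy : ((i+1).factorial : ℚ) ≠ 0 := by
      exact_mod_cast Nat.factorial_ne_zero (i+1)
    have hw2 : ((w:ℚ)+2) ≠ 0 := by positivity
    have hw3 : ((w:ℚ)+3) ≠ 0 := by positivity
    have hi2 : ((i:ℚ)+2) ≠ 0 := by positivity
    have hi3 : ((i:ℚ)+3) ≠ 0 := by positivity
    field_simp
    ring
  exact_mod_cast key

lemma cid (w i : ℕ) :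
    Nat.choose (w+i+4) 2 + Nat.choose (w+1) 2
      = (w+i+3)*(w+1) + Nat.choose (i+3) 2 := by
  have h1 := two_mul_choose_two (w+i+4)
  have h2 := two_mul_choose_two (w+1)
  have h3 := two_mul_choose_two (i+3)
  have e1 : (w:ℕ)+i+4-1 = w+i+3 := by omega
  have e2 : (w:ℕ)+1-1 = w := by omega
  have e3 : (i:ℕ)+3-1 = i+2 := by omega
  rw [e1] at h1
  rw [e2] at h2
  rw [e3] at h3
  nlinarith [h1, h2, h3]

lemma eigen1 {d : ℕ} (hd : 2 ≤ d) :
    d * Tf d 1 = d * Nat.choose (d+1) 2 + Tf d 2 := by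
  obtain ⟨i, rfl⟩ : ∃ i, d = i+2 := ⟨d-2, by omega⟩
  rw [Tf, Tf]
  have e1 : (i:ℕ)+2-1 = i+1 := by omega
  have e2 : (i:ℕ)+2-2 = i := by omega
  have e3 : (i:ℕ)+2+1 = i+3 := by omega
  rw [e1, e2, e3, Nat.choose_one_right]
  have h2 := two_mul_choose_two (i+3)
  have e4 : (i:ℕ)+3-1 = i+2 := by omega
  rw [e4] at h2
  nlinarith [h2]

lemma Tf_pos {d j : ℕ} (h1 : j + 1 ≤ d) : 0 < Tf d j := by
  rw [Tf]
  exact Nat.mul_pos (by omega) (Nat.choose_pos (by omega))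

end Part5

-- ============ part 6 : the induction and final bound ============
section Part6

variable {d : ℕ} {V : Finset α} {E : Finset (Sym2 α)} {𝒳 : Finset (Finset α)}

set_option maxHeartbeats 1000000 in
lemma chainP (hd : 2 ≤ d) (hval : ValidOn V E) (hsp : Sparse d V E)
    (hf : CoverFacts d V E 𝒳) :
    ∀ n m, 1 ≤ m → m + 1 ≤ d → d - m ≤ n →
      Tf d m * hA V 𝒳 (m+1) ≤ Tf d (m+1) * hA V 𝒳 m := by
  intro n
  induction n with
  | zero =>
    intro m _ h2 h3
    omega
  | succ n ih =>
    intro m h1 h2 h3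
    by_cases hcase : m + 1 = d
    · rw [hcase, hA_eq_zero hd hsp hf (le_refl d)]
      simp
    · have h4 : m + 2 ≤ d := by omega
      have hIH := ih (m+1) (by omega) h4 (by omega)
      obtain ⟨w, rfl⟩ : ∃ w, m = w + 1 := ⟨m - 1, by omega⟩
      obtain ⟨i, rfl⟩ : ∃ i, d = w + i + 3 := ⟨d - w - 3, by omega⟩
      have hIj := Ij hval hsp hf w
      -- Tf values
      have hTP : Tf (w+i+3) (w+1) = (i+2) * Nat.choose (w+i+4) (w+1) := by
        rw [Tf, show (w+i+3) - (w+1) = i+2 by omega, show w+i+3+1 = w+i+4 by omega]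
      have hTQ : Tf (w+i+3) (w+1+1) = (i+1) * Nat.choose (w+i+4) (w+2) := by
        rw [Tf, show (w+i+3) - (w+1+1) = i+1 by omega, show w+i+3+1 = w+i+4 by omega,
          show w+1+1 = w+2 by omega]
      have hTR : Tf (w+i+3) (w+1+1+1) = i * Nat.choose (w+i+4) (w+3) := by
        rw [Tf, show (w+i+3) - (w+1+1+1) = i by omega, show w+i+3+1 = w+i+4 by omega,
          show w+1+1+1 = w+3 by omega]
      rw [show w+1+1+1 = w+3 by omega, show w+1+1 = w+2 by omega] at hIH
      rw [hTP, hTQ, show w+1+1 = w+2 by omega]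
      rw [hTQ, hTR] at hIH
      -- the c-identity applied to hIj
      have hc := cid w i
      rw [show w+i+3+1 = w+i+4 by omega] at hIj
      have heig := eigen' w i
      -- work in ℤ
      have hIjZ : ((w:ℤ)+i+3) * (((w:ℤ)+1) * (hA V 𝒳 (w+1) : ℤ)
            + ((w:ℤ)+2) * (hA V 𝒳 (w+2) : ℤ))
          ≤ ((Nat.choose (w+i+4) 2 : ℤ) + (Nat.choose (w+1) 2 : ℤ)) * (hA V 𝒳 (w+1) : ℤ)
            + ((w:ℤ)+2)*((w:ℤ)+1) * (hA V 𝒳 (w+2) : ℤ)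
            + (Nat.choose (w+3) 2 : ℤ) * (hA V 𝒳 (w+3) : ℤ) := by
        exact_mod_cast hIj
      have hcZ : ((Nat.choose (w+i+4) 2 : ℤ) + (Nat.choose (w+1) 2 : ℤ))
          = ((w:ℤ)+i+3)*((w:ℤ)+1) + (Nat.choose (i+3) 2 : ℤ) := by
        exact_mod_cast hc
      -- star inequality
      have hc2 : ((Nat.choose (w+i+4) 2 : ℤ) + (Nat.choose (w+1) 2 : ℤ)) * (hA V 𝒳 (w+1) : ℤ)
          = (((w:ℤ)+i+3)*((w:ℤ)+1) + (Nat.choose (i+3) 2 : ℤ)) * (hA V 𝒳 (w+1) : ℤ) := by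
        linear_combination (hA V 𝒳 (w+1) : ℤ) * hcZ
      have hstar : ((w:ℤ)+2)*((i:ℤ)+2) * (hA V 𝒳 (w+2) : ℤ)
          ≤ (Nat.choose (i+3) 2 : ℤ) * (hA V 𝒳 (w+1) : ℤ)
            + (Nat.choose (w+3) 2 : ℤ) * (hA V 𝒳 (w+3) : ℤ) := by
        linarith [hIjZ, hc2]
      have hIHZ : ((i:ℤ)+1) * (Nat.choose (w+i+4) (w+2) : ℤ) * (hA V 𝒳 (w+3) : ℤ)
          ≤ (i:ℤ) * (Nat.choose (w+i+4) (w+3) : ℤ) * (hA V 𝒳 (w+2) : ℤ) := by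
        exact_mod_cast hIH
      have heigZ : ((w:ℤ)+2)*((i:ℤ)+2)*(((i:ℤ)+1) * (Nat.choose (w+i+4) (w+2) : ℤ))
          = (Nat.choose (i+3) 2 : ℤ) * (((i:ℤ)+2) * (Nat.choose (w+i+4) (w+1) : ℤ))
            + (Nat.choose (w+3) 2 : ℤ) * ((i:ℤ) * (Nat.choose (w+i+4) (w+3) : ℤ)) := by
        exact_mod_cast heig
      -- combine
      have hgoalZ : ((i:ℤ)+2) * (Nat.choose (w+i+4) (w+1) : ℤ) * (hA V 𝒳 (w+2) : ℤ)
          ≤ ((i:ℤ)+1) * (Nat.choose (w+i+4) (w+2) : ℤ) * (hA V 𝒳 (w+1) : ℤ) := by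
        have hQ0 : (0:ℤ) ≤ ((i:ℤ)+1) * (Nat.choose (w+i+4) (w+2) : ℤ) := by positivity
        have hC0 : (0:ℤ) ≤ (Nat.choose (w+3) 2 : ℤ) := by positivity
        have hCpos : (0:ℤ) < (Nat.choose (i+3) 2 : ℤ) := by
          exact_mod_cast Nat.choose_pos (by omega : 2 ≤ i+3)
        have t1 := mul_le_mul_of_nonneg_left hstar hQ0
        have t3 := mul_le_mul_of_nonneg_left hIHZ hC0
        have heig2 : ((w:ℤ)+2)*((i:ℤ)+2)*(((i:ℤ)+1) * (Nat.choose (w+i+4) (w+2) : ℤ))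
              * (hA V 𝒳 (w+2) : ℤ)
            = (Nat.choose (i+3) 2 : ℤ) * (((i:ℤ)+2) * (Nat.choose (w+i+4) (w+1) : ℤ))
                * (hA V 𝒳 (w+2) : ℤ)
              + (Nat.choose (w+3) 2 : ℤ) * ((i:ℤ) * (Nat.choose (w+i+4) (w+3) : ℤ))
                * (hA V 𝒳 (w+2) : ℤ) := by
          linear_combination (hA V 𝒳 (w+2) : ℤ) * heigZ
        have key : (Nat.choose (i+3) 2 : ℤ)
              * (((i:ℤ)+2) * (Nat.choose (w+i+4) (w+1) : ℤ) * (hA V 𝒳 (w+2) : ℤ))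
            ≤ (Nat.choose (i+3) 2 : ℤ)
              * (((i:ℤ)+1) * (Nat.choose (w+i+4) (w+2) : ℤ) * (hA V 𝒳 (w+1) : ℤ)) := by
          linarith [t1, t3, heig2]
        exact le_of_mul_le_mul_left key hCpos
      exact_mod_cast hgoalZ

lemma chainR (hd : 2 ≤ d) (hval : ValidOn V E) (hsp : Sparse d V E)
    (hf : CoverFacts d V E 𝒳) :
    ∀ j, 1 ≤ j → j + 1 ≤ d → Tf d 1 * hA V 𝒳 j ≤ Tf d j * hA V 𝒳 1 := by
  intro j
  induction j with
  | zero => omega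
  | succ n ihn =>
    intro _ h2
    rcases Nat.eq_zero_or_pos n with hn | hn
    · subst hn
      exact le_refl _
    · have hR := ihn hn (by omega)
      have hP := chainP hd hval hsp hf (d - n) n hn (by omega) (le_refl _)
      have h1 := Nat.mul_le_mul_left (Tf d 1) hP
      have h2' := Nat.mul_le_mul_left (Tf d (n+1)) hR
      have hTn : 0 < Tf d n := Tf_pos (by omega)
      refine Nat.le_of_mul_le_mul_left ?_ hTn
      calc Tf d n * (Tf d 1 * hA V 𝒳 (n+1))
          = Tf d 1 * (Tf d n * hA V 𝒳 (n+1)) := by ring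
        _ ≤ Tf d 1 * (Tf d (n+1) * hA V 𝒳 n) := h1
        _ = Tf d (n+1) * (Tf d 1 * hA V 𝒳 n) := by ring
        _ ≤ Tf d (n+1) * (Tf d n * hA V 𝒳 1) := h2'
        _ = Tf d n * (Tf d (n+1) * hA V 𝒳 1) := by ring

/-- the key strict bound d * a_j < T_j (m-1) -/
lemma main_bound (hd : 2 ≤ d) (hval : ValidOn V E) (hsp : Sparse d V E)
    (hf : CoverFacts d V E 𝒳) (h𝒳2 : 2 ≤ 𝒳.card) {j : ℕ} (h1 : 1 ≤ j) (h2 : j + 1 ≤ d) :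
    d * hA V 𝒳 j < Tf d j * (𝒳.card - 1) := by
  -- strict base at j = 1
  have hbase : d * hA V 𝒳 1 < Tf d 1 * (𝒳.card - 1) := by
    have hI := I1 hval hsp hf h𝒳2
    have hP1 : Tf d 1 * hA V 𝒳 2 ≤ Tf d 2 * hA V 𝒳 1 :=
      chainP hd hval hsp hf (d-1) 1 le_rfl hd (by omega)
    have he1 := eigen1 hd
    obtain ⟨m1, hm⟩ : ∃ m1, 𝒳.card = m1 + 2 := ⟨𝒳.card - 2, by omega⟩
    rw [hm]
    have hT1 : 0 < Tf d 1 := Tf_pos (by omega)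
    have hC2 : 0 < Nat.choose (d+1) 2 := Nat.choose_pos (by omega)
    rw [hm] at hI
    -- multiply hI by Tf d 1
    have hImul := Nat.mul_le_mul_left (Tf d 1) hI
    -- in ℤ
    have hIZ : (Tf d 1 : ℤ) * ((d:ℤ) * (hA V 𝒳 1 : ℤ) + (Nat.choose (d+1) 2 : ℤ) + 1)
        ≤ (Tf d 1 : ℤ) * (((m1:ℤ)+2) * (Nat.choose (d+1) 2 : ℤ) + (hA V 𝒳 2 : ℤ)) := by
      exact_mod_cast hImul
    have hP1Z : (Tf d 1 : ℤ) * (hA V 𝒳 2 : ℤ) ≤ (Tf d 2 : ℤ) * (hA V 𝒳 1 : ℤ) := by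
      exact_mod_cast hP1
    have he1Z : (d:ℤ) * (Tf d 1 : ℤ)
        = (d:ℤ) * (Nat.choose (d+1) 2 : ℤ) + (Tf d 2 : ℤ) := by
      exact_mod_cast he1
    have hgoalZ : (Nat.choose (d+1) 2 : ℤ) * ((d:ℤ) * (hA V 𝒳 1 : ℤ))
        < (Nat.choose (d+1) 2 : ℤ) * ((Tf d 1 : ℤ) * ((m1:ℤ)+1)) := by
      have hT1Z : (1:ℤ) ≤ (Tf d 1 : ℤ) := by exact_mod_cast hT1
      have he2 : (Tf d 1 : ℤ) * ((d:ℤ) * (hA V 𝒳 1 : ℤ))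
          = (d:ℤ) * (Nat.choose (d+1) 2 : ℤ) * (hA V 𝒳 1 : ℤ)
            + (Tf d 2 : ℤ) * (hA V 𝒳 1 : ℤ) := by
        linear_combination (hA V 𝒳 1 : ℤ) * he1Z
      linarith [hIZ, hP1Z, he2, hT1Z]
    have hC2Z : (0:ℤ) < (Nat.choose (d+1) 2 : ℤ) := by exact_mod_cast hC2
    have hfin : (d:ℤ) * (hA V 𝒳 1 : ℤ) < (Tf d 1 : ℤ) * ((m1:ℤ)+1) :=
      lt_of_mul_lt_mul_left hgoalZ (le_of_lt hC2Z)
    have : (m1:ℤ)+1 = ((m1+2-1 : ℕ) : ℤ) := by push_cast; omega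
    rw [this] at hfin
    exact_mod_cast hfin
  -- chain up
  have hR := chainR hd hval hsp hf j h1 h2
  have hTj : 0 < Tf d j := Tf_pos h2
  have hT1 : 0 < Tf d 1 := Tf_pos (by omega)
  apply Nat.lt_of_mul_lt_mul_left (a := Tf d 1)
  calc Tf d 1 * (d * hA V 𝒳 j) = d * (Tf d 1 * hA V 𝒳 j) := by ring
    _ ≤ d * (Tf d j * hA V 𝒳 1) := Nat.mul_le_mul_left d hR
    _ = Tf d j * (d * hA V 𝒳 1) := by ring
    _ < Tf d j * (Tf d 1 * (𝒳.card - 1)) := mul_lt_mul_of_pos_left hbase hTj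
    _ = Tf d 1 * (Tf d j * (𝒳.card - 1)) := by ring

end Part6

/-- Lemma 3.3(c) of the paper. -/
theorem stmt8 (d k : ℕ) (hd : 2 ≤ d) (hk : k ≤ d - 2)
    (V : Finset α) (E : Finset (Sym2 α)) (hval : ValidOn V E) (hsp : Sparse d V E)
    (𝒳 : Finset (Finset α)) (h𝒳 : 𝒳 = critCover d V E) (h𝒳2 : 2 ≤ 𝒳.card)
    (hbig : ∀ U F, CritComponent d V E U F → d + 2 ≤ U.card)
    (a : ℕ → ℤ) (ha : ∀ j ≤ d, a j = ∑ U ∈ theta V 𝒳 j, ((degX 𝒳 U : ℤ) - 1)) :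
    (d : ℤ) * ((d : ℤ) - k) * a (k + 1) <
      ((k : ℤ) + 2) * ((d : ℤ) - k - 1) * (Nat.choose (d + 1) (k + 2) : ℤ) *
        ((𝒳.card : ℤ) - 1) := by
  have hf : CoverFacts d V E 𝒳 := cover_facts hd hsp h𝒳 hbig
  have hkd : k + 2 ≤ d := by omega
  have hmain := main_bound hd hval hsp hf h𝒳2 (by omega : 1 ≤ k+1)
    (by omega : (k+1) + 1 ≤ d)
  have ha' : a (k+1) = (hA V 𝒳 (k+1) : ℤ) := by
    rw [ha (k+1) (by omega), hA, Nat.cast_sum]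
    apply Finset.sum_congr rfl
    intro U hU
    have h2 := (mem_theta.mp hU).2.2
    rw [Nat.cast_sub (by omega : 1 ≤ degX 𝒳 U)]
    norm_num
  rw [ha']
  have hcs := Nat.choose_succ_right_eq (d+1) (k+1)
  have e : d+1-(k+1) = d - k := by omega
  rw [e] at hcs
  have hbin : (d - k) * Tf d (k+1)
      = (k+2) * ((d-k-1) * Nat.choose (d+1) (k+2)) := by
    rw [Tf, show d - (k+1) = d-k-1 by omega]
    calc (d-k) * ((d-k-1) * Nat.choose (d+1) (k+1))
        = (d-k-1) * (Nat.choose (d+1) (k+1) * (d-k)) := by ring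
      _ = (d-k-1) * (Nat.choose (d+1) (k+2) * (k+2)) := by rw [← hcs]
      _ = (k+2) * ((d-k-1) * Nat.choose (d+1) (k+2)) := by ring
  have hN : d * ((d-k) * hA V 𝒳 (k+1))
      < (k+2) * ((d-k-1) * Nat.choose (d+1) (k+2)) * (𝒳.card - 1) := by
    calc d * ((d-k) * hA V 𝒳 (k+1)) = (d-k) * (d * hA V 𝒳 (k+1)) := by ring
      _ < (d-k) * (Tf d (k+1) * (𝒳.card - 1)) :=
          mul_lt_mul_of_pos_left hmain (by omega : 0 < d - k)
      _ = ((d-k) * Tf d (k+1)) * (𝒳.card - 1) := by ring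
      _ = (k+2) * ((d-k-1) * Nat.choose (d+1) (k+2)) * (𝒳.card - 1) := by rw [hbin]
  have hZ : ((d * ((d-k) * hA V 𝒳 (k+1)) : ℕ) : ℤ)
      < (((k+2) * ((d-k-1) * Nat.choose (d+1) (k+2)) * (𝒳.card - 1) : ℕ) : ℤ) := by
    exact_mod_cast hN
  have c1 : ((d - k : ℕ) : ℤ) = (d:ℤ) - k := by omega
  have c2 : ((d - k - 1 : ℕ) : ℤ) = (d:ℤ) - k - 1 := by omega
  have c3 : ((𝒳.card - 1 : ℕ) : ℤ) = (𝒳.card : ℤ) - 1 := by omega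
  push_cast at hZ
  rw [c1, c2, c3] at hZ
  linarith [hZ]
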